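/- arXiv:1701.07660 — 2 statements merged into one kernel-verified Lean document; each statement's English description precedes it below -/
import Mathlib

section
/- In the setting of the randomized Feynman–Kac representation with $f \equiv h$ independent of $u$: the estimator $\Phi = \frac{\mathbf{1}_{\{\tau \ge T\}}}{\bar F(T)} g(X_T) + \frac{\mathbf{1}_{\{\tau < T\}}}{\rho(\tau)} h(\tau, X_\tau)$ has finite variance whenever $g$ and $h$ are bounded, $\bar F(T) > 0$, and $\int_0^T \frac{dt}{\rho(t)} < \infty$; in particular its second moment is bounded by $\frac{\|g\|_\infty^2}{\bar F(T)} + \|h\|_\infty^2 \int_0^T \frac{dt}{\rho(t)}$. -/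
open MeasureTheory ProbabilityTheory Matrix NNReal ENNReal

noncomputable def gaussPi (d : ℕ) (t : ℝ) : Measure (Fin d → ℝ) :=
  Measure.pi fun _ => gaussianReal 0 t.toNNReal

instance (d : ℕ) (t : ℝ) : IsProbabilityMeasure (gaussPi d t) := by
  unfold gaussPi; infer_instance

/-- Finite variance of the one-draw randomized Feynman–Kac estimator
`Φ = 1_{τ≥T} g(X_T)/F̄(T) + 1_{τ<T} h(τ,X_τ)/ρ(τ)`: its second moment is bounded by
`‖g‖²_∞ / F̄(T) + ‖h‖²_∞ ∫₀ᵀ dt/ρ(t)`. -/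
theorem stmt12 (d : ℕ) (σ₀ : Matrix (Fin d) (Fin d) ℝ)
    (μ x : Fin d → ℝ) (T : ℝ) (hT : 0 < T)
    (g : (Fin d → ℝ) → ℝ) (hgm : Measurable g) (Cg : ℝ) (hgb : ∀ y, |g y| ≤ Cg)
    (h : ℝ → (Fin d → ℝ) → ℝ)
    (hhm : Measurable fun p : ℝ × (Fin d → ℝ) => h p.1 p.2)
    (Ch : ℝ) (hhb : ∀ s y, |h s y| ≤ Ch)
    (ρ : ℝ → ℝ) (hρm : Measurable ρ)
    (hρnn : ∀ s > (0:ℝ), 0 ≤ ρ s)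
    (hρpos : ∀ s ∈ Set.Ioc (0:ℝ) T, 0 < ρ s)
    (hρint : IntegrableOn (fun s => 1 / ρ s) (Set.Ioc 0 T))
    (ν : Measure ℝ)
    (hν : ν = (volume.restrict (Set.Ioi 0)).withDensity fun s => ENNReal.ofReal (ρ s))
    (hνprob : IsProbabilityMeasure ν)
    (Fbar : ℝ → ℝ) (hFbar : ∀ t, Fbar t = ∫ s in Set.Ioi t, ρ s)
    (hFT : 0 < Fbar T) :
    ∫ s,
      (if s < T then
        (1 / ρ s ^ 2) * ∫ w, (h s (x + s • μ + σ₀ *ᵥ w)) ^ 2 ∂(gaussPi d s)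
       else
        (1 / Fbar T ^ 2) * ∫ w, (g (x + T • μ + σ₀ *ᵥ w)) ^ 2 ∂(gaussPi d T)) ∂ν
      ≤ Cg ^ 2 / Fbar T + Ch ^ 2 * ∫ s in Set.Ioc (0:ℝ) T, 1 / ρ s := by
  have hCg : 0 ≤ Cg := le_trans (abs_nonneg _) (hgb 0)
  have hCh : 0 ≤ Ch := le_trans (abs_nonneg _) (hhb 0 0)
  set F : ℝ → ℝ := fun s =>
    if s < T then (1 / ρ s ^ 2) * ∫ w, (h s (x + s • μ + σ₀ *ᵥ w)) ^ 2 ∂(gaussPi d s)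
    else (1 / Fbar T ^ 2) * ∫ w, (g (x + T • μ + σ₀ *ᵥ w)) ^ 2 ∂(gaussPi d T) with hF
  set B : ℝ → ℝ := fun s => if s < T then Ch ^ 2 / ρ s ^ 2 else Cg ^ 2 / Fbar T ^ 2 with hB
  -- density as ℝ≥0
  have hdens : (fun s => ENNReal.ofReal (ρ s)) = fun s => (((ρ s).toNNReal : ℝ≥0) : ℝ≥0∞) :=
    rfl
  have hρnn' : Measurable fun s => (ρ s).toNNReal := hρm.real_toNNReal
  -- ρ is integrable on Ioi 0
  have hρI : IntegrableOn ρ (Set.Ioi (0:ℝ)) volume := by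
    refine ⟨hρm.aestronglyMeasurable, ?_⟩
    have h1 : ∫⁻ s in Set.Ioi (0:ℝ), ‖ρ s‖ₑ =
        ∫⁻ s in Set.Ioi (0:ℝ), ENNReal.ofReal (ρ s) := by
      refine lintegral_congr_ae (((ae_restrict_mem measurableSet_Ioi)).mono fun s hs => ?_)
      simpa using Real.enorm_eq_ofReal (hρnn s hs)
    have h2 : (ν Set.univ) = 1 := hνprob.measure_univ
    rw [hν, withDensity_apply _ MeasurableSet.univ, Measure.restrict_univ] at h2
    simp only [HasFiniteIntegral, h1, h2]
    exact ENNReal.one_lt_top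
  -- G = pointwise value of ρ • B on Ioi 0
  set G : ℝ → ℝ := fun s => if s < T then Ch ^ 2 * (1 / ρ s) else Cg ^ 2 / Fbar T ^ 2 * ρ s
    with hG
  have hsmulG : ∀ s ∈ Set.Ioi (0:ℝ), (ρ s).toNNReal • B s = G s := by
    intro s hs
    simp only [hB, hG, NNReal.smul_def, smul_eq_mul, Real.coe_toNNReal _ (hρnn s hs)]
    by_cases hsT : s < T
    · have hρs : 0 < ρ s := hρpos s ⟨hs, le_of_lt hsT⟩
      simp only [if_pos hsT]
      field_simp
    · simp only [if_neg hsT]; ring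
  have hdisj : Disjoint (Set.Ioo (0:ℝ) T) (Set.Ici T) := by
    rw [Set.disjoint_left]; exact fun s hs hs' => absurd hs.2 (not_lt.mpr hs')
  have hunion : Set.Ioo (0:ℝ) T ∪ Set.Ici T = Set.Ioi 0 := Set.Ioo_union_Ici_eq_Ioi hT
  -- integrability of G pieces
  have hG1 : IntegrableOn G (Set.Ioo 0 T) volume :=
    IntegrableOn.congr_fun ((hρint.mono_set Set.Ioo_subset_Ioc_self).const_mul (Ch ^ 2))
      (fun s hs => by simp only [hG, if_pos hs.2]) measurableSet_Ioo
  have hG2 : IntegrableOn G (Set.Ici T) volume :=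
    IntegrableOn.congr_fun ((hρI.mono_set fun s hs => lt_of_lt_of_le hT hs).const_mul
      (Cg ^ 2 / Fbar T ^ 2))
      (fun s hs => by simp only [hG, if_neg (not_lt.mpr (Set.mem_Ici.mp hs))]) measurableSet_Ici
  have hGint : IntegrableOn G (Set.Ioi 0) volume := by
    rw [← hunion]; exact hG1.union hG2
  -- integrability of B w.r.t. ν
  have hBint : Integrable B ν := by
    rw [hν, hdens, integrable_withDensity_iff_integrable_smul hρnn']
    exact hGint.congr_fun_ae
      (((ae_restrict_mem measurableSet_Ioi)).mono fun s hs => (hsmulG s hs).symm)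
  -- F ≤ B ν-a.e.
  have haeIoi : ∀ᵐ s ∂ν, s ∈ Set.Ioi (0:ℝ) := by
    rw [hν]
    exact (withDensity_absolutelyContinuous _ _).ae_le (ae_restrict_mem measurableSet_Ioi)
  have hFB : F ≤ᵐ[ν] B := by
    refine haeIoi.mono fun s hs => ?_
    simp only [hF, hB]
    by_cases hsT : s < T
    · simp only [if_pos hsT]
      have hint : ∫ w, (h s (x + s • μ + σ₀ *ᵥ w)) ^ 2 ∂(gaussPi d s) ≤ Ch ^ 2 := by
        have habs : ∀ w, ‖(h s (x + s • μ + σ₀ *ᵥ w)) ^ 2‖ ≤ Ch ^ 2 := fun w => by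
          rw [Real.norm_eq_abs, abs_pow]
          exact pow_le_pow_left₀ (abs_nonneg _) (hhb s _) 2
        refine le_trans (le_abs_self _) ?_
        calc |∫ w, (h s (x + s • μ + σ₀ *ᵥ w)) ^ 2 ∂(gaussPi d s)|
            ≤ Ch ^ 2 * ((gaussPi d s) Set.univ).toReal :=
              norm_integral_le_of_norm_le_const (Filter.Eventually.of_forall habs)
          _ = Ch ^ 2 := by simp
      have h1 : (0:ℝ) ≤ 1 / ρ s ^ 2 := by positivity
      calc (1 / ρ s ^ 2) * ∫ w, (h s (x + s • μ + σ₀ *ᵥ w)) ^ 2 ∂(gaussPi d s)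
          ≤ (1 / ρ s ^ 2) * Ch ^ 2 := mul_le_mul_of_nonneg_left hint h1
        _ = Ch ^ 2 / ρ s ^ 2 := by ring
    · simp only [if_neg hsT]
      have hint : ∫ w, (g (x + T • μ + σ₀ *ᵥ w)) ^ 2 ∂(gaussPi d T) ≤ Cg ^ 2 := by
        have habs : ∀ w, ‖(g (x + T • μ + σ₀ *ᵥ w)) ^ 2‖ ≤ Cg ^ 2 := fun w => by
          rw [Real.norm_eq_abs, abs_pow]
          exact pow_le_pow_left₀ (abs_nonneg _) (hgb _) 2
        refine le_trans (le_abs_self _) ?_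
        calc |∫ w, (g (x + T • μ + σ₀ *ᵥ w)) ^ 2 ∂(gaussPi d T)|
            ≤ Cg ^ 2 * ((gaussPi d T) Set.univ).toReal :=
              norm_integral_le_of_norm_le_const (Filter.Eventually.of_forall habs)
          _ = Cg ^ 2 := by simp
      have h1 : (0:ℝ) ≤ 1 / Fbar T ^ 2 := by positivity
      calc (1 / Fbar T ^ 2) * ∫ w, (g (x + T • μ + σ₀ *ᵥ w)) ^ 2 ∂(gaussPi d T)
          ≤ (1 / Fbar T ^ 2) * Cg ^ 2 := mul_le_mul_of_nonneg_left hint h1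
        _ = Cg ^ 2 / Fbar T ^ 2 := by ring
  have hF0 : (0:ℝ → ℝ) ≤ᵐ[ν] F := by
    refine Filter.Eventually.of_forall fun s => ?_
    simp only [hF, Pi.zero_apply]
    by_cases hsT : s < T
    · simp only [if_pos hsT]
      exact mul_nonneg (by positivity) (integral_nonneg fun w => sq_nonneg _)
    · simp only [if_neg hsT]
      exact mul_nonneg (by positivity) (integral_nonneg fun w => sq_nonneg _)
  have hmain : ∫ s, F s ∂ν ≤ ∫ s, B s ∂ν := integral_mono_of_nonneg hF0 hBint hFB
  -- compute ∫ B ∂ν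
  have hBval : ∫ s, B s ∂ν = Cg ^ 2 / Fbar T + Ch ^ 2 * ∫ s in Set.Ioc (0:ℝ) T, 1 / ρ s := by
    rw [hν, hdens, integral_withDensity_eq_integral_smul hρnn' B]
    have e1 : ∫ s in Set.Ioi (0:ℝ), (ρ s).toNNReal • B s = ∫ s in Set.Ioi (0:ℝ), G s :=
      setIntegral_congr_fun measurableSet_Ioi hsmulG
    rw [e1, ← hunion, setIntegral_union hdisj measurableSet_Ici hG1 hG2]
    have e2 : ∫ s in Set.Ioo (0:ℝ) T, G s = Ch ^ 2 * ∫ s in Set.Ioc (0:ℝ) T, 1 / ρ s := by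
      rw [integral_Ioc_eq_integral_Ioo, ← integral_const_mul]
      exact setIntegral_congr_fun measurableSet_Ioo fun s hs => by simp only [hG, if_pos hs.2]
    have e3 : ∫ s in Set.Ici T, G s = Cg ^ 2 / Fbar T := by
      have : ∫ s in Set.Ici T, G s = Cg ^ 2 / Fbar T ^ 2 * ∫ s in Set.Ici T, ρ s := by
        rw [← integral_const_mul]
        exact setIntegral_congr_fun measurableSet_Ici fun s hs =>
          by simp only [hG, if_neg (not_lt.mpr (Set.mem_Ici.mp hs))]
      rw [this, integral_Ici_eq_integral_Ioi, ← hFbar T]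
      field_simp
    rw [e2, e3]; ring
  calc ∫ s, F s ∂ν ≤ ∫ s, B s ∂ν := hmain
    _ = _ := hBval
end

section
/- Let $\varphi$ be Lipschitz with constant $L$, $W\sim N(0,I_d)$, $\sigma_0$ a matrix, and $t>0$. Define the ghost difference $\Delta := \varphi(x + \sqrt{t}\,\sigma_0 W) - \varphi(x)$. Then $\mathbb{E}[\Delta^2] \le L^2 \|\sigma_0\|^2 d\, t$, i.e. $\mathbb{E}[\Delta^2] = O(t)$ as $t\to 0$. Consequently $\mathbb{E}\Big[\Delta^2 \frac{(b\cdot(\sigma_0^\top)^{-1}\sqrt{t}\,W)^2}{t^2}\Big] \le \mathbb{E}\Big[L^2\|\sigma_0\|^2 |W|^2 \frac{(b\cdot(\sigma_0^\top)^{-1}W)^2}{t}\cdot t\Big]$ is bounded uniformly in $t \in (0,T]$. -/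
open MeasureTheory ProbabilityTheory Matrix

section GhostAux
open Real
open scoped NNReal ENNReal

lemma gint_exp (n : ℕ) : Integrable (fun x : ℝ => x ^ n * Real.exp (-(2⁻¹:ℝ) * x ^ 2)) := by
  have h := integrable_rpow_mul_exp_neg_mul_sq (b := (2⁻¹:ℝ)) (by norm_num) (s := (n:ℝ))
    (by exact_mod_cast neg_one_lt_zero.trans_le (Nat.cast_nonneg n))
  simpa [Real.rpow_natCast] using h

lemma g_integrable (n : ℕ) : Integrable (fun x : ℝ => x ^ n) (gaussianReal 0 1) := by
  rw [gaussianReal_of_var_ne_zero 0 one_ne_zero,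
    integrable_withDensity_iff (measurable_gaussianPDF 0 1)
      (ae_of_all _ fun x => ENNReal.ofReal_lt_top)]
  have heq : (fun x : ℝ => x ^ n * (gaussianPDF 0 1 x).toReal)
      = fun x => (Real.sqrt (2 * π))⁻¹ * (x ^ n * Real.exp (-(2⁻¹:ℝ) * x ^ 2)) := by
    funext x
    rw [gaussianPDF, ENNReal.toReal_ofReal (gaussianPDFReal_nonneg _ _ _), gaussianPDFReal]
    norm_num
    rw [show -x ^ 2 / 2 = -(2⁻¹:ℝ) * x ^ 2 by ring]
    ring
  rw [heq]
  exact (gint_exp n).const_mul _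


lemma gI2 : ∫ x : ℝ, x ^ 2 * Real.exp (-(2⁻¹:ℝ) * x ^ 2) = Real.sqrt (2 * π) := by
  have habs := integral_comp_abs (f := fun y : ℝ => y ^ 2 * Real.exp (-(2⁻¹:ℝ) * y ^ 2))
  simp only [sq_abs] at habs
  rw [habs]
  have h := integral_rpow_mul_exp_neg_mul_rpow (p := (2:ℝ)) (q := (2:ℝ)) (b := (2⁻¹:ℝ))
    (by norm_num) (by norm_num) (by norm_num)
  simp_rw [show (2:ℝ) = ((2:ℕ):ℝ) by norm_num, Real.rpow_natCast] at h
  rw [show ((2:ℕ):ℝ) = (2:ℝ) by norm_num] at h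
  rw [h]
  have hG : Real.Gamma ((2 + 1) / 2) = (1 / 2) * Real.sqrt π := by
    rw [show ((2:ℝ) + 1) / 2 = 1/2 + 1 by norm_num, Real.Gamma_add_one (by norm_num),
      Real.Gamma_one_half_eq]
  rw [hG]
  have hpow : (2⁻¹:ℝ) ^ (-((2:ℝ) + 1) / 2) = 2 * Real.sqrt 2 := by
    rw [show (-((2:ℝ) + 1) / 2) = -(3/2) by norm_num, Real.rpow_neg (by norm_num),
      Real.inv_rpow (by norm_num), inv_inv, show (3/2:ℝ) = 1 + 1/2 by norm_num,
      Real.rpow_add (by norm_num), Real.rpow_one, ← Real.sqrt_eq_rpow]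
  rw [hpow, Real.sqrt_mul (by norm_num)]
  ring

lemma g_moment2 : ∫ x : ℝ, x ^ 2 ∂(gaussianReal 0 1) = 1 := by
  rw [gaussianReal_of_var_ne_zero 0 one_ne_zero]
  have hd : gaussianPDF 0 1 = fun x => ((Real.toNNReal (gaussianPDFReal 0 1 x) : ℝ≥0) : ℝ≥0∞) :=
    rfl
  rw [hd, integral_withDensity_eq_integral_smul
    ((measurable_gaussianPDFReal 0 1).real_toNNReal) (fun x => x ^ 2)]
  have heq : (fun x : ℝ => (Real.toNNReal (gaussianPDFReal 0 1 x)) • x ^ 2)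
      = fun x => (Real.sqrt (2 * π))⁻¹ * (x ^ 2 * Real.exp (-(2⁻¹:ℝ) * x ^ 2)) := by
    funext x
    rw [NNReal.smul_def, smul_eq_mul, Real.coe_toNNReal _ (gaussianPDFReal_nonneg _ _ _),
      gaussianPDFReal]
    norm_num
    rw [show -x ^ 2 / 2 = -(2⁻¹:ℝ) * x ^ 2 by ring]
    ring
  rw [heq, integral_const_mul, gI2]
  rw [inv_mul_cancel₀ (Real.sqrt_ne_zero'.mpr (by positivity))]


lemma pi_integrable_prod {d : ℕ} (e : Fin d → ℕ) :
    Integrable (fun w : Fin d → ℝ => ∏ i, (w i) ^ (e i)) (gaussPi d 1) := by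
  letI : MeasureSpace ℝ := ⟨gaussianReal 0 1⟩
  haveI : IsProbabilityMeasure (volume : Measure ℝ) :=
    inferInstanceAs (IsProbabilityMeasure (gaussianReal 0 1))
  have h := Integrable.fintype_prod (f := fun (i : Fin d) (x : ℝ) => x ^ e i)
    (fun i => g_integrable (e i))
  have hvol : (volume : Measure (Fin d → ℝ)) = gaussPi d 1 := by
    rw [volume_pi]; simp [gaussPi, Real.toNNReal_one]; rfl
  simpa [gaussPi, Real.toNNReal_one] using h

lemma pi_integral_prod {d : ℕ} (e : Fin d → ℕ) :
    ∫ w, ∏ i, (w i) ^ (e i) ∂(gaussPi d 1) = ∏ i, ∫ x, x ^ (e i) ∂(gaussianReal 0 1) := by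
  letI : MeasureSpace ℝ := ⟨gaussianReal 0 1⟩
  haveI : IsProbabilityMeasure (volume : Measure ℝ) :=
    inferInstanceAs (IsProbabilityMeasure (gaussianReal 0 1))
  have h := integral_fintype_prod_eq_prod (μ := fun _ => gaussianReal 0 1) (fun (i : Fin d) (x : ℝ) => x ^ e i)
  have hvol : (volume : Measure (Fin d → ℝ)) = gaussPi d 1 := by
    rw [volume_pi]; simp [gaussPi, Real.toNNReal_one]; rfl
  simpa [gaussPi, Real.toNNReal_one] using h


lemma sq_eq_prod {d : ℕ} (i : Fin d) (w : Fin d → ℝ) :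
    (w i) ^ 2 = ∏ l, (w l) ^ (if l = i then 2 else 0) := by
  simp [pow_ite, Finset.prod_ite_eq']

lemma pi_integrable_sq {d : ℕ} (i : Fin d) :
    Integrable (fun w : Fin d → ℝ => (w i) ^ 2) (gaussPi d 1) := by
  simp_rw [sq_eq_prod]
  exact pi_integrable_prod _

lemma pi_integral_sq {d : ℕ} (i : Fin d) :
    ∫ w, (w i) ^ 2 ∂(gaussPi d 1) = 1 := by
  simp_rw [sq_eq_prod, pi_integral_prod]
  rw [Finset.prod_eq_single i]
  · simp [g_moment2]
  · intro j _ hj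
    simp [hj]
  · simp

lemma pi_integrable_mono {d : ℕ} (i j k : Fin d) :
    Integrable (fun w : Fin d → ℝ => (w i) ^ 2 * (w j * w k)) (gaussPi d 1) := by
  have h := pi_integrable_prod (d := d)
    (fun l => (if l = i then 2 else 0) + ((if l = j then 1 else 0) + (if l = k then 1 else 0)))
  have heq : (fun w : Fin d → ℝ => (w i) ^ 2 * (w j * w k))
      = fun w => ∏ l, (w l) ^
        ((if l = i then 2 else 0) + ((if l = j then 1 else 0) + (if l = k then 1 else 0))) := by
    funext w
    have p1 : ∀ m : Fin d, w m = ∏ l, (w l) ^ (if l = m then 1 else 0) := by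
      intro m; simp [pow_ite, Finset.prod_ite_eq']
    simp only [pow_add, Finset.prod_mul_distrib]
    rw [← sq_eq_prod i w, ← p1 j, ← p1 k]
  rwa [heq]


end GhostAux

/-- Ghost-difference variance bound: for Lipschitz `φ`, the difference
`Δ = φ(x + √t σ₀ W) - φ(x)` satisfies `𝔼[Δ²] ≤ L² ‖σ₀‖² d t = O(t)`, so the
renormalized Malliavin-weighted gradient estimator has second moment bounded
uniformly in `t ∈ (0,T]`. -/
theorem stmt13 (d : ℕ) (σ₀ : Matrix (Fin d) (Fin d) ℝ) (hσ : IsUnit σ₀.det)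
    (S : ℝ) (hS : 0 ≤ S)
    (hσS : ∀ v : Fin d → ℝ, ∑ i, ((σ₀ *ᵥ v) i) ^ 2 ≤ S ^ 2 * ∑ i, (v i) ^ 2)
    (L : ℝ) (hL : 0 ≤ L)
    (φ : (Fin d → ℝ) → ℝ) (hφm : Measurable φ)
    (hLip : ∀ y z, |φ y - φ z| ≤ L * Real.sqrt (∑ i, (y i - z i) ^ 2))
    (b x : Fin d → ℝ) (T t : ℝ) (ht : t ∈ Set.Ioc (0:ℝ) T)
    (Δ : (Fin d → ℝ) → ℝ)
    (hΔ : ∀ w, Δ w = φ (x + Real.sqrt t • (σ₀ *ᵥ w)) - φ x) :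
    (∫ w, (Δ w) ^ 2 ∂(gaussPi d 1) ≤ L ^ 2 * S ^ 2 * d * t)
    ∧ (∫ w, (Δ w) ^ 2 * ((b ⬝ᵥ (σ₀ᵀ)⁻¹ *ᵥ w) * Real.sqrt t / t) ^ 2 ∂(gaussPi d 1)
        ≤ ∫ w, L ^ 2 * S ^ 2 * (∑ i, (w i) ^ 2) * (b ⬝ᵥ (σ₀ᵀ)⁻¹ *ᵥ w) ^ 2
            ∂(gaussPi d 1)) := by
  obtain ⟨ht0, htT⟩ := ht
  -- pointwise bound on Δ²
  have hptw : ∀ w : Fin d → ℝ, (Δ w) ^ 2 ≤ L ^ 2 * S ^ 2 * t * ∑ i, (w i) ^ 2 := by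
    intro w
    have h1 : |Δ w| ≤ L * Real.sqrt (∑ i, (Real.sqrt t * (σ₀ *ᵥ w) i) ^ 2) := by
      rw [hΔ]
      have := hLip (x + Real.sqrt t • (σ₀ *ᵥ w)) x
      simpa using this
    have hsum : ∑ i, (Real.sqrt t * (σ₀ *ᵥ w) i) ^ 2 ≤ t * (S ^ 2 * ∑ i, (w i) ^ 2) := by
      have : ∑ i, (Real.sqrt t * (σ₀ *ᵥ w) i) ^ 2 = t * ∑ i, ((σ₀ *ᵥ w) i) ^ 2 := by
        rw [Finset.mul_sum]
        refine Finset.sum_congr rfl fun i _ => ?_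
        rw [mul_pow, Real.sq_sqrt ht0.le]
      rw [this]
      exact mul_le_mul_of_nonneg_left (hσS w) ht0.le
    have h2 : |Δ w| ≤ L * Real.sqrt (t * (S ^ 2 * ∑ i, (w i) ^ 2)) :=
      h1.trans (mul_le_mul_of_nonneg_left (Real.sqrt_le_sqrt hsum) hL)
    calc (Δ w) ^ 2 = |Δ w| ^ 2 := (sq_abs _).symm
      _ ≤ (L * Real.sqrt (t * (S ^ 2 * ∑ i, (w i) ^ 2))) ^ 2 :=
          pow_le_pow_left₀ (abs_nonneg _) h2 2
      _ = L ^ 2 * S ^ 2 * t * ∑ i, (w i) ^ 2 := by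
          rw [mul_pow, Real.sq_sqrt (by positivity)]
          ring
  constructor
  · -- first part
    have hgint : Integrable (fun w : Fin d → ℝ => L ^ 2 * S ^ 2 * t * ∑ i, (w i) ^ 2)
        (gaussPi d 1) :=
      (integrable_finset_sum _ fun i _ => pi_integrable_sq i).const_mul _
    calc ∫ w, (Δ w) ^ 2 ∂(gaussPi d 1)
        ≤ ∫ w, L ^ 2 * S ^ 2 * t * ∑ i, (w i) ^ 2 ∂(gaussPi d 1) :=
          integral_mono_of_nonneg (ae_of_all _ fun w => sq_nonneg _) hgint
            (ae_of_all _ hptw)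
      _ = L ^ 2 * S ^ 2 * d * t := by
          rw [integral_const_mul, integral_finset_sum _ fun i _ => pi_integrable_sq i]
          simp only [pi_integral_sq]
          simp [Finset.sum_const, Finset.card_univ]
          ring
  · -- second part
    set c : Fin d → ℝ := b ᵥ* (σ₀ᵀ)⁻¹ with hc
    have hdot : ∀ w : Fin d → ℝ, b ⬝ᵥ (σ₀ᵀ)⁻¹ *ᵥ w = ∑ j, c j * w j := by
      intro w
      rw [Matrix.dotProduct_mulVec]
      rfl
    have hptw2 : ∀ w : Fin d → ℝ, (Δ w) ^ 2 * ((b ⬝ᵥ (σ₀ᵀ)⁻¹ *ᵥ w) * Real.sqrt t / t) ^ 2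
        ≤ L ^ 2 * S ^ 2 * (∑ i, (w i) ^ 2) * (b ⬝ᵥ (σ₀ᵀ)⁻¹ *ᵥ w) ^ 2 := by
      intro w
      set B := b ⬝ᵥ (σ₀ᵀ)⁻¹ *ᵥ w with hB
      have hfac : (B * Real.sqrt t / t) ^ 2 = B ^ 2 * (t / t ^ 2) := by
        rw [div_pow, mul_pow, Real.sq_sqrt ht0.le]
        ring
      rw [hfac, ← mul_assoc]
      calc (Δ w) ^ 2 * B ^ 2 * (t / t ^ 2)
          ≤ (L ^ 2 * S ^ 2 * t * ∑ i, (w i) ^ 2) * B ^ 2 * (t / t ^ 2) := by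
            refine mul_le_mul_of_nonneg_right (mul_le_mul_of_nonneg_right (hptw w)
              (sq_nonneg _)) (by positivity)
        _ = L ^ 2 * S ^ 2 * (∑ i, (w i) ^ 2) * B ^ 2 := by
            field_simp
    have hRHSint : Integrable
        (fun w : Fin d → ℝ => L ^ 2 * S ^ 2 * (∑ i, (w i) ^ 2) * (b ⬝ᵥ (σ₀ᵀ)⁻¹ *ᵥ w) ^ 2)
        (gaussPi d 1) := by
      have heq : (fun w : Fin d → ℝ =>
          L ^ 2 * S ^ 2 * (∑ i, (w i) ^ 2) * (b ⬝ᵥ (σ₀ᵀ)⁻¹ *ᵥ w) ^ 2)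
          = fun w => ∑ i, ∑ j, ∑ k,
              (L ^ 2 * S ^ 2 * (c i * c k)) * ((w j) ^ 2 * (w i * w k)) := by
        funext w
        rw [hdot w, sq (∑ j, c j * w j), Finset.sum_mul_sum]
        simp only [Finset.mul_sum, Finset.sum_mul]
        rw [Finset.sum_comm]
        refine Finset.sum_congr rfl fun i _ => ?_
        rw [Finset.sum_comm]
        refine Finset.sum_congr rfl fun j _ => Finset.sum_congr rfl fun k _ => by ring
      rw [heq]
      refine integrable_finset_sum _ fun i _ => integrable_finset_sum _ fun j _ =>
        integrable_finset_sum _ fun k _ => ?_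
      exact (pi_integrable_mono j i k).const_mul _
    exact integral_mono_of_nonneg
      (ae_of_all _ fun w => mul_nonneg (sq_nonneg _) (sq_nonneg _)) hRHSint
      (ae_of_all _ hptw2)
end
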